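/- Let h : ℝⁿ → ℝ be convex and absolutely homogeneous, x ∈ ℝⁿ with ‖x‖ = 1, G ∈ ℝⁿ with ⟨x, G⟩ = 0, and t' > 0. Let z minimize y ↦ t'·h(y) + (1/2)·‖y − (x − t' • G)‖², and suppose c := ⟨x, z⟩ > 0. Set t := t'/c and v := (1/c) • z − x. Then ⟨x, v⟩ = 0, t > 0, and v solves the Riemannian proximal-gradient subproblem on the sphere: for every u ∈ ℝⁿ with ⟨x, u⟩ = 0, ⟨G, v⟩ + (1/(2t))·‖v‖² + h(x + v) ≤ ⟨G, u⟩ + (1/(2t))·‖u‖² + h(x + u). -/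

import Mathlib

open RealInnerProductSpace

/-- The proxy step-size technique solves the Riemannian proximal-gradient subproblem on
the sphere: with `z = prox_{t' h}(x − t' • G)`, `c = ⟨x, z⟩ > 0`, `t = t'/c` and
`v = (1/c) • z − x`, the vector `v` is tangent at `x`, `t > 0`, and `v` minimizes
`u ↦ ⟨G, u⟩ + (1/(2t))‖u‖² + h(x + u)` over the tangent space `T_x S`. -/
theorem proxy_stepsize_solves_subproblem {n : ℕ} (h : EuclideanSpace ℝ (Fin n) → ℝ)
    (hconv : ConvexOn ℝ Set.univ h)
    (hhom : ∀ (α : ℝ) (x : EuclideanSpace ℝ (Fin n)), h (α • x) = |α| * h x)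
    (x G : EuclideanSpace ℝ (Fin n)) (hx : ‖x‖ = 1) (hxG : ⟪x, G⟫ = 0)
    (t' : ℝ) (ht' : 0 < t') (z : EuclideanSpace ℝ (Fin n))
    (hz : ∀ y, t' * h z + (1/2) * ‖z - (x - t' • G)‖^2 ≤
      t' * h y + (1/2) * ‖y - (x - t' • G)‖^2)
    (hc : 0 < ⟪x, z⟫)
    (t : ℝ) (htdef : t = t' / ⟪x, z⟫)
    (v : EuclideanSpace ℝ (Fin n)) (hvdef : v = (⟪x, z⟫)⁻¹ • z - x) :
    ⟪x, v⟫ = 0 ∧ 0 < t ∧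
    ∀ u : EuclideanSpace ℝ (Fin n), ⟪x, u⟫ = 0 →
      ⟪G, v⟫ + (1/(2*t)) * ‖v‖^2 + h (x + v) ≤
        ⟪G, u⟫ + (1/(2*t)) * ‖u‖^2 + h (x + u) := by
  set c : ℝ := ⟪x, z⟫ with hcdef
  have hc0 : c ≠ 0 := ne_of_gt hc
  have hxx : ⟪x, x⟫ = (1:ℝ) := by
    rw [real_inner_self_eq_norm_sq, hx]; norm_num
  have hxv : ⟪x, v⟫ = 0 := by
    rw [hvdef, inner_sub_right, real_inner_smul_right, hxx, ← hcdef]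
    field_simp
    norm_num
  have ht : 0 < t := by rw [htdef]; positivity
  refine ⟨hxv, ht, ?_⟩
  intro u hxu
  have hzc : z = c • (x + v) := by
    rw [hvdef, smul_add, smul_sub, smul_smul, mul_inv_cancel₀ hc0, one_smul]
    abel
  -- squared norm expansion lemma
  have expand : ∀ w : EuclideanSpace ℝ (Fin n), ⟪x, w⟫ = 0 →
      ‖c • (x + w) - (x - t' • G)‖^2
        = c^2 * (1 + ⟪w, w⟫) - 2*c + 2*c*t'*⟪G, w⟫ + 1 + t'^2 * ⟪G, G⟫ := by
    intro w hw
    have hwx : ⟪w, x⟫ = 0 := by rw [real_inner_comm]; exact hw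
    have hGx : ⟪G, x⟫ = 0 := by rw [real_inner_comm]; exact hxG
    have hwG : ⟪w, G⟫ = ⟪G, w⟫ := real_inner_comm _ _
    rw [← real_inner_self_eq_norm_sq]
    simp only [inner_sub_left, inner_sub_right, inner_add_left, inner_add_right,
      real_inner_smul_left, real_inner_smul_right, hxx, hw, hwx, hGx, hxG, hwG]
    ring
  have hzval := hz (c • (x + u))
  rw [hzc] at hzval
  rw [expand v hxv, expand u hxu, hhom c (x+v), hhom c (x+u),
    abs_of_pos hc] at hzval
  -- now scalar inequality
  have h2t : 1/(2*t) = c/(2*t') := by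
    rw [htdef]; field_simp
  rw [h2t]
  have key : (c*t') * (⟪G, v⟫ + c/(2*t') * ‖v‖^2 + h (x + v)) ≤
      (c*t') * (⟪G, u⟫ + c/(2*t') * ‖u‖^2 + h (x + u)) := by
    have hv2 : ⟪v, v⟫ = ‖v‖^2 := real_inner_self_eq_norm_sq v
    have hu2 : ⟪u, u⟫ = ‖u‖^2 := real_inner_self_eq_norm_sq u
    have e1 : (c*t') * (c/(2*t')) = c^2/2 := by field_simp
    nlinarith [hzval]
  exact le_of_mul_le_mul_left key (by positivity)
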